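/- For every x ∈ ℝ³ and every direction v ∈ ℝ³, (DG(x)[v])·G(x)⁻¹ + G(x)⁻¹·(DG(x)[v]) = (2iℓ/(ℓ² + r²))·(v·τ). -/

import Mathlib

open Matrix Complex

noncomputable section

attribute [local instance] Matrix.normedAddCommGroup Matrix.normedSpace

/-- The Pauli matrices τ₁, τ₂, τ₃. -/
def pauli : Fin 3 → Matrix (Fin 2) (Fin 2) ℂ :=
  ![!![0, 1; 1, 0], !![0, -I; I, 0], !![1, 0; 0, -1]]

/-- The Pauli vector x·τ = x₁τ₁ + x₂τ₂ + x₃τ₃ for x ∈ ℝ³. -/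
def pauliVec (x : EuclideanSpace ℝ (Fin 3)) : Matrix (Fin 2) (Fin 2) ℂ :=
  (x 0 : ℂ) • pauli 0 + (x 1 : ℂ) • pauli 1 + (x 2 : ℂ) • pauli 2

/-- G(x) = (ℓ·I + i x·τ)/√(ℓ² + r²), the inverse gnomonic projection. -/
def Gmap (ℓ : ℝ) (x : EuclideanSpace ℝ (Fin 3)) : Matrix (Fin 2) (Fin 2) ℂ :=
  (((Real.sqrt (ℓ ^ 2 + ‖x‖ ^ 2))⁻¹ : ℝ) : ℂ) •
    ((ℓ : ℂ) • (1 : Matrix (Fin 2) (Fin 2) ℂ) + I • pauliVec x)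

/-- H(x) = ((ℓ² − r²)·I + 2iℓ x·τ)/(ℓ² + r²), the inverse stereographic projection. -/
def Hmap (ℓ : ℝ) (x : EuclideanSpace ℝ (Fin 3)) : Matrix (Fin 2) (Fin 2) ℂ :=
  ((((ℓ ^ 2 + ‖x‖ ^ 2))⁻¹ : ℝ) : ℂ) •
    (((ℓ ^ 2 - ‖x‖ ^ 2 : ℝ) : ℂ) • (1 : Matrix (Fin 2) (Fin 2) ℂ)
      + ((2 * ℓ : ℝ) : ℂ) • I • pauliVec x)

-- norm squared
lemma norm_sq_eq' (x : EuclideanSpace ℝ (Fin 3)) :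
    (‖x‖ ^ 2 : ℝ) = x 0 ^ 2 + x 1 ^ 2 + x 2 ^ 2 := by
  rw [EuclideanSpace.norm_eq, Real.sq_sqrt (by positivity)]
  simp [Fin.sum_univ_three, sq_abs]

lemma pauliVec_mul_pauliVec (x y : EuclideanSpace ℝ (Fin 3)) :
    pauliVec x * pauliVec y + pauliVec y * pauliVec x
      = ((2 * (x 0 * y 0 + x 1 * y 1 + x 2 * y 2) : ℝ) : ℂ) • 1 := by
  ext i j
  fin_cases i <;> fin_cases j <;>
    simp [pauliVec, pauli, Matrix.mul_apply, Fin.sum_univ_succ, Matrix.one_apply] <;>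
    push_cast <;> ring_nf <;> simp [Complex.I_sq] <;> ring

def pauliCLM : EuclideanSpace ℝ (Fin 3) →L[ℝ] Matrix (Fin 2) (Fin 2) ℂ :=
  ((EuclideanSpace.proj (0 : Fin 3)).smulRight (pauli 0)) +
  ((EuclideanSpace.proj (1 : Fin 3)).smulRight (pauli 1)) +
  ((EuclideanSpace.proj (2 : Fin 3)).smulRight (pauli 2))

lemma pauliCLM_apply (x : EuclideanSpace ℝ (Fin 3)) : pauliCLM x = pauliVec x := by
  ext i j
  simp [pauliCLM, pauliVec, Matrix.smul_apply, Complex.real_smul]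

lemma hasFDerivAt_Gmap (ℓ : ℝ) (hℓ : 0 < ℓ) (x : EuclideanSpace ℝ (Fin 3)) :
    HasFDerivAt (Gmap ℓ)
      ((((Real.sqrt (ℓ ^ 2 + ‖x‖ ^ 2))⁻¹ : ℝ) : ℂ) • (I • pauliCLM)
        + (Complex.ofRealCLM.comp
            ((-(Real.sqrt (ℓ ^ 2 + ‖x‖ ^ 2) ^ 2)⁻¹) •
              ((1 / (2 * Real.sqrt (ℓ ^ 2 + ‖x‖ ^ 2))) • (2 • innerSL ℝ x)))).smulRight
            ((ℓ : ℂ) • (1 : Matrix (Fin 2) (Fin 2) ℂ) + I • pauliVec x)) x := by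
  have hq : 0 < ℓ ^ 2 + ‖x‖ ^ 2 := by positivity
  have hs : Real.sqrt (ℓ ^ 2 + ‖x‖ ^ 2) ≠ 0 := by
    positivity
  have h1 : HasFDerivAt (fun y : EuclideanSpace ℝ (Fin 3) => ℓ ^ 2 + ‖y‖ ^ 2)
      (2 • innerSL ℝ x) x := ((hasStrictFDerivAt_norm_sq x).hasFDerivAt).const_add (ℓ ^ 2)
  have h2 := h1.sqrt hq.ne'
  have h3 := (hasDerivAt_inv hs).comp_hasFDerivAt x h2
  have h4 := Complex.ofRealCLM.hasFDerivAt.comp x h3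
  have hP : HasFDerivAt pauliVec pauliCLM x := by
    have h := pauliCLM.hasFDerivAt (x := x)
    rwa [show ⇑pauliCLM = pauliVec from funext pauliCLM_apply] at h
  have hA := ((hP.const_smul I).const_add ((ℓ : ℂ) • (1 : Matrix (Fin 2) (Fin 2) ℂ)))
  exact h4.smul hA

lemma fderiv_Gmap_apply (ℓ : ℝ) (hℓ : 0 < ℓ) (x v : EuclideanSpace ℝ (Fin 3)) :
    fderiv ℝ (Gmap ℓ) x v =
      ((-( (inner ℝ x v : ℝ)) / (Real.sqrt (ℓ ^ 2 + ‖x‖ ^ 2) * (ℓ ^ 2 + ‖x‖ ^ 2)) : ℝ) : ℂ) •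
          ((ℓ : ℂ) • (1 : Matrix (Fin 2) (Fin 2) ℂ) + I • pauliVec x)
        + (((Real.sqrt (ℓ ^ 2 + ‖x‖ ^ 2))⁻¹ : ℝ) : ℂ) • (I • pauliVec v) := by
  have hq : 0 < ℓ ^ 2 + ‖x‖ ^ 2 := by positivity
  have hs : 0 < Real.sqrt (ℓ ^ 2 + ‖x‖ ^ 2) := Real.sqrt_pos.mpr hq
  have key : (-(Real.sqrt (ℓ ^ 2 + ‖x‖ ^ 2) ^ 2)⁻¹ *
      ((1 / (2 * Real.sqrt (ℓ ^ 2 + ‖x‖ ^ 2))) * (2 * (inner ℝ x v : ℝ))))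
      = -((inner ℝ x v : ℝ)) / (Real.sqrt (ℓ ^ 2 + ‖x‖ ^ 2) * (ℓ ^ 2 + ‖x‖ ^ 2)) := by
    rw [Real.sq_sqrt hq.le]
    field_simp
  rw [(hasFDerivAt_Gmap ℓ hℓ x).fderiv]
  simp only [ContinuousLinearMap.add_apply, ContinuousLinearMap.smul_apply,
    ContinuousLinearMap.smulRight_apply, ContinuousLinearMap.comp_apply,
    Complex.ofRealCLM_apply, pauliCLM_apply, innerSL_apply_apply, smul_eq_mul, nsmul_eq_mul, Nat.cast_ofNat]
  rw [add_comm, key]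

lemma pauliVec_sq (x : EuclideanSpace ℝ (Fin 3)) :
    pauliVec x * pauliVec x = ((‖x‖ ^ 2 : ℝ) : ℂ) • 1 := by
  have h := pauliVec_mul_pauliVec x x
  have h2 : (2 : ℂ) • (pauliVec x * pauliVec x)
      = (2 : ℂ) • (((‖x‖ ^ 2 : ℝ) : ℂ) • (1 : Matrix (Fin 2) (Fin 2) ℂ)) := by
    rw [two_smul]
    rw [h, norm_sq_eq' x, smul_smul]
    push_cast
    ring_nf
  exact smul_right_injective _ (by norm_num) h2

lemma Gmap_inv (ℓ : ℝ) (hℓ : 0 < ℓ) (x : EuclideanSpace ℝ (Fin 3)) :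
    (Gmap ℓ x)⁻¹ = (((Real.sqrt (ℓ ^ 2 + ‖x‖ ^ 2))⁻¹ : ℝ) : ℂ) •
      ((ℓ : ℂ) • (1 : Matrix (Fin 2) (Fin 2) ℂ) - I • pauliVec x) := by
  have hq : 0 < ℓ ^ 2 + ‖x‖ ^ 2 := by positivity
  have hs : 0 < Real.sqrt (ℓ ^ 2 + ‖x‖ ^ 2) := Real.sqrt_pos.mpr hq
  refine (Matrix.inv_eq_right_inv ?_)
  rw [Gmap, smul_mul_smul_comm]
  have expand : ((ℓ : ℂ) • (1 : Matrix (Fin 2) (Fin 2) ℂ) + I • pauliVec x) *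
      ((ℓ : ℂ) • (1 : Matrix (Fin 2) (Fin 2) ℂ) - I • pauliVec x)
      = (((ℓ ^ 2 + ‖x‖ ^ 2 : ℝ)) : ℂ) • 1 := by
    simp only [mul_sub, add_mul, smul_mul_assoc, mul_smul_comm, smul_smul, pauliVec_sq,
      mul_one, one_mul]
    match_scalars
    · linear_combination (-((‖x‖ : ℝ) ^ 2 : ℂ)) * Complex.I_mul_I
    · ring
  rw [expand, smul_smul]
  rw [← Complex.ofReal_mul, ← Complex.ofReal_mul]
  norm_cast
  rw [show ((Real.sqrt (ℓ ^ 2 + ‖x‖ ^ 2))⁻¹ * (Real.sqrt (ℓ ^ 2 + ‖x‖ ^ 2))⁻¹) *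
      (ℓ ^ 2 + ‖x‖ ^ 2) = 1 by
    rw [← mul_inv, Real.mul_self_sqrt hq.le, inv_mul_cancel₀ hq.ne']]
  exact one_smul _ _

lemma alg (P Q : Matrix (Fin 2) (Fin 2) ℂ) (c s a r w : ℂ)
    (hPP : P * P = r • 1) (hPQ : P * Q + Q * P = (2 * a) • 1) :
    (c • (w • 1 + I • P) + s • (I • Q)) * (s • (w • 1 - I • P))
      + (s • (w • 1 - I • P)) * (c • (w • 1 + I • P) + s • (I • Q))
    = (2 * c * s * (w ^ 2 + r) + 2 * a * s ^ 2) • (1 : Matrix (Fin 2) (Fin 2) ℂ)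
      + (2 * w * s ^ 2) • (I • Q) := by
  have hPQ2 : P * Q = (2 * a) • 1 - Q * P := eq_sub_of_add_eq hPQ
  simp only [mul_add, add_mul, mul_sub, sub_mul, smul_mul_assoc, mul_smul_comm, smul_smul,
    smul_add, smul_sub, hPP, hPQ2, mul_one, one_mul]
  match_scalars <;>
  · ring_nf
    try simp only [Complex.I_sq]
    try ring_nf


/-- dG G⁻¹ + G⁻¹ dG = (2iℓ/(ℓ² + r²))·(v·τ). -/
theorem dG_Ginv_add_Ginv_dG (ℓ : ℝ) (hℓ : 0 < ℓ) (x v : EuclideanSpace ℝ (Fin 3)) :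
    fderiv ℝ (Gmap ℓ) x v * (Gmap ℓ x)⁻¹ + (Gmap ℓ x)⁻¹ * fderiv ℝ (Gmap ℓ) x v =
      (2 * (ℓ : ℂ) * I / ((ℓ ^ 2 + ‖x‖ ^ 2 : ℝ) : ℂ)) • pauliVec v := by
  have hq : 0 < ℓ ^ 2 + ‖x‖ ^ 2 := by positivity
  have hs : 0 < Real.sqrt (ℓ ^ 2 + ‖x‖ ^ 2) := Real.sqrt_pos.mpr hq
  have hss : ((Real.sqrt (ℓ ^ 2 + ‖x‖ ^ 2) : ℝ) : ℂ) * ((Real.sqrt (ℓ ^ 2 + ‖x‖ ^ 2) : ℝ) : ℂ)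
      = ((ℓ ^ 2 + ‖x‖ ^ 2 : ℝ) : ℂ) := by
    rw [← Complex.ofReal_mul, Real.mul_self_sqrt hq.le]
  have hsne : ((Real.sqrt (ℓ ^ 2 + ‖x‖ ^ 2) : ℝ) : ℂ) ≠ 0 := by
    exact_mod_cast hs.ne'
  have hqne : ((ℓ ^ 2 + ‖x‖ ^ 2 : ℝ) : ℂ) ≠ 0 := by
    exact_mod_cast hq.ne'
  have hinner : (inner ℝ x v : ℝ) = x 0 * v 0 + x 1 * v 1 + x 2 * v 2 := by
    simp [PiLp.inner_apply, Fin.sum_univ_three, mul_comm]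
  have hPP := pauliVec_sq x
  have hPQ : pauliVec x * pauliVec v
      = ((2 * (x 0 * v 0 + x 1 * v 1 + x 2 * v 2) : ℝ) : ℂ) • 1 - pauliVec v * pauliVec x :=
    eq_sub_of_add_eq (pauliVec_mul_pauliVec x v)
  have hPQc : pauliVec x * pauliVec v + pauliVec v * pauliVec x
      = (2 * ((x 0 * v 0 + x 1 * v 1 + x 2 * v 2 : ℝ) : ℂ)) • 1 := by
    rw [pauliVec_mul_pauliVec]
    congr 1
    push_cast
    ring
  have hq' : ((ℓ : ℂ)) ^ 2 + ((‖x‖ : ℝ) : ℂ) ^ 2 ≠ 0 := by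
    push_cast at hqne; exact hqne
  have hss' : ((Real.sqrt (ℓ ^ 2 + ‖x‖ ^ 2) : ℝ) : ℂ) * ((Real.sqrt (ℓ ^ 2 + ‖x‖ ^ 2) : ℝ) : ℂ)
      = ((ℓ : ℂ)) ^ 2 + ((‖x‖ : ℝ) : ℂ) ^ 2 := by push_cast at hss; exact hss
  have halg := alg (pauliVec x) (pauliVec v)
    ((-( (inner ℝ x v : ℝ)) / (Real.sqrt (ℓ ^ 2 + ‖x‖ ^ 2) * (ℓ ^ 2 + ‖x‖ ^ 2)) : ℝ) : ℂ)
    (((Real.sqrt (ℓ ^ 2 + ‖x‖ ^ 2))⁻¹ : ℝ) : ℂ)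
    ((x 0 * v 0 + x 1 * v 1 + x 2 * v 2 : ℝ) : ℂ)
    ((‖x‖ ^ 2 : ℝ) : ℂ) (ℓ : ℂ) (pauliVec_sq x) hPQc
  rw [fderiv_Gmap_apply ℓ hℓ x v, Gmap_inv ℓ hℓ x, halg]
  have h1 : (2 * ((-( (inner ℝ x v : ℝ)) / (Real.sqrt (ℓ ^ 2 + ‖x‖ ^ 2) * (ℓ ^ 2 + ‖x‖ ^ 2)) : ℝ) : ℂ)
        * (((Real.sqrt (ℓ ^ 2 + ‖x‖ ^ 2))⁻¹ : ℝ) : ℂ) * ((ℓ : ℂ) ^ 2 + ((‖x‖ ^ 2 : ℝ) : ℂ))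
        + 2 * ((x 0 * v 0 + x 1 * v 1 + x 2 * v 2 : ℝ) : ℂ)
          * (((Real.sqrt (ℓ ^ 2 + ‖x‖ ^ 2))⁻¹ : ℝ) : ℂ) ^ 2) = 0 := by
    rw [hinner]
    push_cast
    field_simp [hsne, hq']
    ring
  rw [h1, zero_smul, zero_add, smul_smul]
  congr 1
  rw [eq_div_iff hqne]
  push_cast
  have hinv : (((Real.sqrt (ℓ ^ 2 + ‖x‖ ^ 2) : ℝ) : ℂ))⁻¹ ^ 2 * ((ℓ : ℂ) ^ 2 + ((‖x‖ : ℝ) : ℂ) ^ 2)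
      = 1 := by
    rw [← hss']
    field_simp
  linear_combination (2 * (ℓ : ℂ) * I) * hinv
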